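/- For every limit ordinal γ and every ordinal α ≤ γ, there is a partition {A, B} of γ into two sets such that A has order type α and B has order type γ (with the orders induced from γ). -/

import Mathlib

open Ordinal Set

namespace Stmt2Aux

universe u

noncomputable def oT (S : Set Ordinal.{u}) : Ordinal.{u+1} :=
  Ordinal.type ((· < ·) : S → S → Prop)

lemma oT_mono {S T : Set Ordinal.{u}} (h : S ⊆ T) : oT S ≤ oT T :=
  (RelEmbedding.ofMonotone (Set.inclusion h)
    (fun a b hab => (by exact hab : (a : Ordinal) < b))).ordinal_type_le

lemma oT_congr {S T : Set Ordinal.{u}} (e : S ≃o T) : oT S = oT T :=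
  Ordinal.type_eq.2 ⟨e.toRelIsoLT⟩

lemma iso_of_oT_eq {S T : Set Ordinal.{u}} (h : oT S = oT T) : Nonempty (S ≃o T) :=
  (Ordinal.type_eq.1 h).elim fun e => ⟨OrderIso.ofRelIsoLT e⟩

lemma iso_of_squeeze {γ : Ordinal.{u}} {B E : Set Ordinal.{u}} (hEB : E ⊆ B)
    (hBsub : B ⊆ Set.Iio γ) (hE : Nonempty (↥(Set.Iio γ) ≃o ↥E)) :
    Nonempty (↥B ≃o ↥(Set.Iio γ)) := by
  obtain ⟨e⟩ := hE
  have h1 : oT (Set.Iio γ) = oT E := oT_congr e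
  have h2 : oT B = oT (Set.Iio γ) :=
    le_antisymm (oT_mono hBsub) (h1 ▸ oT_mono hEB)
  exact iso_of_oT_eq h2

noncomputable def ev (x : Ordinal) : Ordinal := ω * (x / ω) + 2 * (x % ω)
noncomputable def od (x : Ordinal) : Ordinal := ω * (x / ω) + (2 * (x % ω) + 1)

lemma mod_nat (x : Ordinal) : ∃ n : ℕ, x % ω = n :=
  Ordinal.lt_omega0.1 (Ordinal.mod_lt x omega0_ne_zero)

lemma aux_lt {q q' r r' : Ordinal} (hr : r < ω) (h : q < q' ∨ (q = q' ∧ r < r')) :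
    ω * q + r < ω * q' + r' := by
  rcases h with h | ⟨rfl, h⟩
  · calc ω * q + r < ω * q + ω := add_lt_add_right hr _
      _ = ω * (q + 1) := by rw [mul_add_one]
      _ ≤ ω * q' := by
          apply mul_le_mul_right
          rwa [Ordinal.add_one_eq_succ, Order.succ_le_iff]
      _ ≤ ω * q' + r' := le_self_add
  · exact add_lt_add_right h _

lemma key {x y : Ordinal} (h : x < y) :
    x / ω < y / ω ∨ (x / ω = y / ω ∧ x % ω < y % ω) := by
  rcases lt_trichotomy (x / ω) (y / ω) with hd | hd | hd
  · exact Or.inl hd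
  · right
    refine ⟨hd, ?_⟩
    have hx := Ordinal.div_add_mod x ω
    have hy := Ordinal.div_add_mod y ω
    rw [← hx, ← hy, hd, add_lt_add_iff_left] at h
    exact h
  · exact absurd (Ordinal.div_le_left h.le ω) (not_le.2 hd)

lemma two_mod_lt (x : Ordinal) : 2 * (x % ω) < ω := by
  obtain ⟨n, hn⟩ := mod_nat x
  rw [hn]
  have : (2 : Ordinal) * n = ((2 * n : ℕ) : Ordinal) := by push_cast; ring
  rw [this]
  exact nat_lt_omega0 _

lemma two_mul_lt {a b : Ordinal} (ha : a < ω) (h : a < b) (hb : b < ω) :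
    2 * a < 2 * b := by
  obtain ⟨n, rfl⟩ := Ordinal.lt_omega0.1 ha
  obtain ⟨m, rfl⟩ := Ordinal.lt_omega0.1 hb
  have hnm : n < m := by exact_mod_cast h
  have h1 : (2 : Ordinal) * n = ((2 * n : ℕ) : Ordinal) := by push_cast; ring
  have h2 : (2 : Ordinal) * m = ((2 * m : ℕ) : Ordinal) := by push_cast; ring
  rw [h1, h2]
  have : 2 * n < 2 * m := by omega
  exact_mod_cast this

lemma two_mul_add_one_lt {a b : Ordinal} (ha : a < ω) (h : a < b) (hb : b < ω) :
    2 * a + 1 < 2 * b + 1 := by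
  obtain ⟨n, rfl⟩ := Ordinal.lt_omega0.1 ha
  obtain ⟨m, rfl⟩ := Ordinal.lt_omega0.1 hb
  have hnm : n < m := by exact_mod_cast h
  have h1 : (2 : Ordinal) * n + 1 = ((2 * n + 1 : ℕ) : Ordinal) := by push_cast; ring
  have h2 : (2 : Ordinal) * m + 1 = ((2 * m + 1 : ℕ) : Ordinal) := by push_cast; ring
  rw [h1, h2]
  have : 2 * n + 1 < 2 * m + 1 := by omega
  exact_mod_cast this

lemma ev_strictMono : StrictMono ev := by
  intro x y h
  rcases key h with hd | ⟨hd, hm⟩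
  · exact aux_lt (two_mod_lt x) (Or.inl hd)
  · exact aux_lt (two_mod_lt x) (Or.inr ⟨hd, two_mul_lt (Ordinal.mod_lt x omega0_ne_zero) hm
      (Ordinal.mod_lt y omega0_ne_zero)⟩)

lemma succ_two_mod_lt (x : Ordinal) : 2 * (x % ω) + 1 < ω := by
  have := (Ordinal.isSuccLimit_omega0).succ_lt (two_mod_lt x)
  rwa [← Ordinal.add_one_eq_succ] at this

lemma od_strictMono : StrictMono od := by
  intro x y h
  rcases key h with hd | ⟨hd, hm⟩
  · exact aux_lt (succ_two_mod_lt x) (Or.inl hd)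
  · exact aux_lt (succ_two_mod_lt x) (Or.inr ⟨hd, two_mul_add_one_lt
      (Ordinal.mod_lt x omega0_ne_zero) hm (Ordinal.mod_lt y omega0_ne_zero)⟩)

lemma add_nat_lt {γ s : Ordinal} (hγ : Order.IsSuccLimit γ) (hs : s < γ) (n : ℕ) : s + n < γ := by
  induction n with
  | zero => simpa using hs
  | succ n ih =>
      have : s + (↑(n + 1) : Ordinal) = (s + n) + 1 := by push_cast; rw [add_assoc]
      rw [this]
      exact hγ.succ_lt ih

lemma ev_lt {γ x : Ordinal} (hγ : Order.IsSuccLimit γ) (hx : x < γ) : ev x < γ := by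
  obtain ⟨n, hn⟩ := mod_nat x
  have h1 : ω * (x / ω) < γ := lt_of_le_of_lt (Ordinal.mul_div_le x ω) hx
  have : ev x = ω * (x / ω) + ((2 * n : ℕ) : Ordinal) := by
    rw [ev, hn]; push_cast; ring_nf
  rw [this]
  exact add_nat_lt hγ h1 _

lemma od_lt {γ x : Ordinal} (hγ : Order.IsSuccLimit γ) (hx : x < γ) : od x < γ := by
  obtain ⟨n, hn⟩ := mod_nat x
  have h1 : ω * (x / ω) < γ := lt_of_le_of_lt (Ordinal.mul_div_le x ω) hx
  have : od x = ω * (x / ω) + ((2 * n + 1 : ℕ) : Ordinal) := by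
    rw [od, hn]; push_cast; ring_nf
  rw [this]
  exact add_nat_lt hγ h1 _

lemma div_mod_of_lt {q r : Ordinal} (hr : r < ω) :
    (ω * q + r) / ω = q ∧ (ω * q + r) % ω = r := by
  constructor
  · rw [Ordinal.mul_add_div _ omega0_ne_zero, Ordinal.div_eq_zero_of_lt hr, add_zero]
  · rw [Ordinal.mul_add_mod_self, Ordinal.mod_eq_of_lt hr]

lemma ev_ne_od (x z : Ordinal) : ev x ≠ od z := by
  intro h
  obtain ⟨n, hn⟩ := mod_nat x
  obtain ⟨m, hm⟩ := mod_nat z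
  have h1 : ev x % ω = 2 * (x % ω) := (div_mod_of_lt (two_mod_lt x)).2
  have h2 : od z % ω = 2 * (z % ω) + 1 := (div_mod_of_lt (succ_two_mod_lt z)).2
  rw [h, h2] at h1
  rw [hn, hm] at h1
  have h3 : ((2 * m + 1 : ℕ) : Ordinal) = ((2 * n : ℕ) : Ordinal) := by
    push_cast; rw [← h1]
  have h4 : (2 * m + 1 : ℕ) = 2 * n := by exact_mod_cast h3
  omega

lemma cover {γ : Ordinal} (hγ : Order.IsSuccLimit γ) {y : Ordinal} (hy : y < γ) :
    (∃ x, x < γ ∧ ev x = y) ∨ (∃ x, x < γ ∧ od x = y) := by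
  obtain ⟨n, hn⟩ := mod_nat y
  rcases Nat.even_or_odd n with ⟨k, hk⟩ | ⟨k, hk⟩
  · left
    refine ⟨ω * (y / ω) + k, ?_, ?_⟩
    · have hkn : (k : Ordinal) ≤ n := by
        have : k ≤ n := by omega
        exact_mod_cast this
      calc ω * (y / ω) + (k : Ordinal) ≤ ω * (y / ω) + n := add_le_add_right hkn _
        _ = y := by rw [← hn, Ordinal.div_add_mod]
        _ < γ := hy
    · obtain ⟨hd, hm⟩ := div_mod_of_lt (r := (k : Ordinal)) (nat_lt_omega0 k)
      rw [ev, hd, hm]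
      have h2 : (2 * k : ℕ) = n := by omega
      have : (2 : Ordinal) * k = (n : Ordinal) := by
        rw [← h2]; push_cast; ring
      rw [this, ← hn, Ordinal.div_add_mod]
  · right
    refine ⟨ω * (y / ω) + k, ?_, ?_⟩
    · have hkn : (k : Ordinal) ≤ n := by
        have : k ≤ n := by omega
        exact_mod_cast this
      calc ω * (y / ω) + (k : Ordinal) ≤ ω * (y / ω) + n := add_le_add_right hkn _
        _ = y := by rw [← hn, Ordinal.div_add_mod]
        _ < γ := hy
    · obtain ⟨hd, hm⟩ := div_mod_of_lt (r := (k : Ordinal)) (nat_lt_omega0 k)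
      rw [od, hd, hm]
      have h2 : (2 * k + 1 : ℕ) = n := by omega
      have : (2 : Ordinal) * k + 1 = (n : Ordinal) := by
        rw [← h2]; push_cast; ring
      rw [this, ← hn, Ordinal.div_add_mod]

end Stmt2Aux

open Stmt2Aux

/-- For every limit ordinal γ and every ordinal α ≤ γ, there is a partition
{A, B} of the set of ordinals below γ such that A has order type α and B has order type γ
(with the orders induced from γ). -/
theorem stmt2 (γ α : Ordinal) (hγ : Order.IsSuccLimit γ) (hα : α ≤ γ) :
    ∃ A B : Set Ordinal, A ⊆ Set.Iio γ ∧ B ⊆ Set.Iio γ ∧ Disjoint A B ∧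
      A ∪ B = Set.Iio γ ∧
      Nonempty (↥A ≃o ↥(Set.Iio α)) ∧ Nonempty (↥B ≃o ↥(Set.Iio γ)) := by
  set A : Set Ordinal := Set.range (fun x : Set.Iio α => od x) with hA
  have hAsub : A ⊆ Set.Iio γ := by
    rintro _ ⟨x, rfl⟩
    exact od_lt hγ (lt_of_lt_of_le x.2 hα)
  refine ⟨A, Set.Iio γ \ A, hAsub, Set.diff_subset, Set.disjoint_sdiff_right,
    Set.union_diff_cancel hAsub, ?_, ?_⟩
  · have hsm : StrictMono (fun x : Set.Iio α => od x) := fun a b hab => od_strictMono hab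
    exact ⟨(hsm.orderIso _).symm⟩
  · set B : Set Ordinal := Set.Iio γ \ A with hB
    set E : Set Ordinal := Set.range (fun x : Set.Iio γ => ev x) with hE
    have hEB : E ⊆ B := by
      rintro _ ⟨x, rfl⟩
      refine ⟨ev_lt hγ x.2, ?_⟩
      rintro ⟨z, hz⟩
      exact ev_ne_od x z hz.symm
    have hsm : StrictMono (fun x : Set.Iio γ => ev x) := fun a b hab => ev_strictMono hab
    exact iso_of_squeeze hEB Set.diff_subset ⟨hsm.orderIso _⟩
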